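/- Let S, M, A be finite nonempty types, and let f g : S → M be arbitrary functions (two adversaries). Suppose two tabular learners store policies π, χ : ℕ → S → M → (A → ℝ) updated by the same update rule, where the update to the entry at (s, m) at time t+1 depends only on the current value at (s, m), the state s, and data generated from transitions whose probabilities and rewards are independent of the message coordinate m. If the initializations satisfy π 0 s m = π 0 s m' for all s, m, m' (uniform along M), then π t s (f s) = χ t s (g s) for all t ∈ ℕ and all s ∈ S. -/
import Mathlib

/-- Proposition 1 (tabular independence from adversaries): two copies of the same tabular
learner, trained against adversaries `f` and `g` respectively, execute identical policies
provided uniform initialisation along the message axis. The update rule `U` for the entry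
at `(s, m)` depends only on the time, the state `s`, and the current value at `(s, m)`
(environment data being independent of the message coordinate). -/
theorem tabular_victim_independent_of_adversary
    {S M A : Type} [Fintype S] [Fintype M] [Fintype A]
    [Nonempty S] [Nonempty M] [Nonempty A] [DecidableEq M]
    (f g : S → M)
    (π χ : ℕ → S → M → A → ℝ)
    (U : ℕ → S → (A → ℝ) → (A → ℝ))
    (hπ : ∀ t s m, π (t + 1) s m = if m = f s then U t s (π t s m) else π t s m)
    (hχ : ∀ t s m, χ (t + 1) s m = if m = g s then U t s (χ t s m) else χ t s m)
    (hunif : ∀ s m m', π 0 s m = π 0 s m')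
    (hinit : ∀ s m, π 0 s m = χ 0 s m) :
    ∀ (t : ℕ) (s : S), π t s (f s) = χ t s (g s) := by
  intro t
  induction t with
  | zero => intro s; rw [hunif s (f s) (g s), hinit]
  | succ t ih =>
    intro s
    rw [hπ, hχ, if_pos rfl, if_pos rfl, ih]
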